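/- For every integer k ≥ 0, the square of the tree L(k) satisfies lmw(L(k)²) = k = lmw(L(k)). -/

import Mathlib

open scoped Classical

noncomputable section

namespace LMW

variable {V : Type*} [Fintype V]

/-- The bipartite graph `G[Vᵢ, V̄ᵢ]` consisting of the edges of `G` crossing the cut at
position `i` of the linear layout `σ` (here `Vᵢ` is the set of the first `i` vertices
in the layout). -/
def cutGraph (G : SimpleGraph V) (σ : V ≃ Fin (Fintype.card V)) (i : ℕ) : SimpleGraph V where
  Adj u v := G.Adj u v ∧
    (((σ u : ℕ) < i ∧ i ≤ (σ v : ℕ)) ∨ ((σ v : ℕ) < i ∧ i ≤ (σ u : ℕ)))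
  symm := by
    constructor
    intro u v h
    exact ⟨h.1.symm, h.2.symm⟩
  loopless := by
    constructor
    intro u h
    exact G.irrefl h.1

/-- `M` is an induced matching in `H`: a set of edges of `H` such that any two distinct
edges of `M` share no endpoint and no endpoint of one is adjacent in `H` to an endpoint
of the other. -/
def IsInducedMatching (H : SimpleGraph V) (M : Finset (Sym2 V)) : Prop :=
  (↑M : Set (Sym2 V)) ⊆ H.edgeSet ∧
    ∀ e ∈ M, ∀ f ∈ M, e ≠ f → ∀ u ∈ e, ∀ v ∈ f, u ≠ v ∧ ¬ H.Adj u v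

/-- `mim H` is the size of a maximum induced matching of `H`. -/
def mim (H : SimpleGraph V) : ℕ :=
  sSup {n : ℕ | ∃ M : Finset (Sym2 V), IsInducedMatching H M ∧ M.card = n}

/-- The MIM-width of `G` under the linear layout `σ`: the maximum over all cuts
`1 ≤ i < |V|` of the size of a maximum induced matching of the cut graph. -/
def mw (G : SimpleGraph V) (σ : V ≃ Fin (Fintype.card V)) : ℕ :=
  (Finset.Ico 1 (Fintype.card V)).sup fun i => mim (cutGraph G σ i)

/-- The linear MIM-width of `G`: the minimum of `mw G σ` over all linear layouts `σ`. -/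
def lmw (G : SimpleGraph V) : ℕ :=
  sInf {m : ℕ | ∃ σ : V ≃ Fin (Fintype.card V), mw G σ = m}

/-- The `m`-th power of a graph: two distinct vertices are adjacent iff their distance
in `G` is at most `m`. -/
def graphPow (G : SimpleGraph V) (m : ℕ) : SimpleGraph V where
  Adj u v := u ≠ v ∧ G.edist u v ≤ m
  symm := by
    constructor
    intro u v h
    refine ⟨h.1.symm, ?_⟩
    rw [SimpleGraph.edist_comm]
    exact h.2
  loopless := by
    constructor
    intro u h
    exact h.1 rfl

/-- Vertex type of the tree `L k`:  `L 0` is a single vertex; `L (k+1)` consists of a root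
`u = Sum.inl ()`, three children `vᵢ = Sum.inr (i, Sum.inl ())` and, below each `vᵢ`, a copy
of `L k` whose vertices are `Sum.inr (i, Sum.inr a)`. -/
def LV : ℕ → Type
  | 0 => Unit
  | k + 1 => Unit ⊕ (Fin 3 × (Unit ⊕ LV k))

instance instDecEqLV : ∀ k, DecidableEq (LV k)
  | 0 => inferInstanceAs (DecidableEq Unit)
  | k + 1 =>
    letI := instDecEqLV k
    inferInstanceAs (DecidableEq (Unit ⊕ (Fin 3 × (Unit ⊕ LV k))))

instance instFintypeLV : ∀ k, Fintype (LV k)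
  | 0 => inferInstanceAs (Fintype Unit)
  | k + 1 =>
    letI := instFintypeLV k
    inferInstanceAs (Fintype (Unit ⊕ (Fin 3 × (Unit ⊕ LV k))))

/-- The root of `L k`. -/
def Lroot : ∀ k, LV k
  | 0 => ()
  | _ + 1 => Sum.inl ()

/-- The tree `L k`: the root `u` is adjacent to the three children `vᵢ`, each child `vᵢ` is
adjacent to the root of the `i`-th copy of `L k`, and within each copy the edges are those
of `L k`. -/
def Lgraph : ∀ k, SimpleGraph (LV k)
  | 0 => ⊥
  | k + 1 => SimpleGraph.fromRel (fun x y : LV (k + 1) =>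
      (∃ i : Fin 3, x = Sum.inl () ∧ y = Sum.inr (i, Sum.inl ())) ∨
      (∃ i : Fin 3, x = Sum.inr (i, Sum.inl ()) ∧ y = Sum.inr (i, Sum.inr (Lroot k))) ∨
      (∃ (i : Fin 3) (a b : LV k), x = Sum.inr (i, Sum.inr a) ∧ y = Sum.inr (i, Sum.inr b) ∧
        (Lgraph k).Adj a b))


set_option linter.unusedSectionVars false
set_option maxHeartbeats 1000000

/-! ### auxiliary development -/


lemma isInducedMatching_empty (H : SimpleGraph V) : IsInducedMatching H ∅ := by
  constructor
  · simp
  · intro e he; simp at he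

lemma IsInducedMatching.subset {H : SimpleGraph V} {M M' : Finset (Sym2 V)}
    (h : IsInducedMatching H M) (hs : M' ⊆ M) : IsInducedMatching H M' := by
  refine ⟨fun e he => h.1 (hs he), fun e he f hf => h.2 e (hs he) f (hs hf)⟩

lemma mim_set_nonempty (H : SimpleGraph V) :
    {n : ℕ | ∃ M : Finset (Sym2 V), IsInducedMatching H M ∧ M.card = n}.Nonempty :=
  ⟨0, ∅, isInducedMatching_empty H, by simp⟩

lemma mim_set_bddAbove (H : SimpleGraph V) :
    BddAbove {n : ℕ | ∃ M : Finset (Sym2 V), IsInducedMatching H M ∧ M.card = n} := by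
  refine ⟨Fintype.card (Sym2 V), ?_⟩
  rintro n ⟨M, _, rfl⟩
  exact Finset.card_le_univ M

lemma card_le_mim {H : SimpleGraph V} {M : Finset (Sym2 V)} (h : IsInducedMatching H M) :
    M.card ≤ mim H :=
  le_csSup (mim_set_bddAbove H) ⟨M, h, rfl⟩

lemma mim_le {H : SimpleGraph V} {m : ℕ}
    (h : ∀ M : Finset (Sym2 V), IsInducedMatching H M → M.card ≤ m) : mim H ≤ m := by
  refine csSup_le (mim_set_nonempty H) ?_
  rintro n ⟨M, hM, rfl⟩
  exact h M hM

lemma exists_matching_of_le_mim {H : SimpleGraph V} {k : ℕ} (h : k ≤ mim H) :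
    ∃ M : Finset (Sym2 V), IsInducedMatching H M ∧ M.card = k := by
  have hmem := Nat.sSup_mem (mim_set_nonempty H) (mim_set_bddAbove H)
  obtain ⟨M, hM, hcard⟩ := hmem
  have hk' : k ≤ M.card := by rw [hcard]; exact h
  obtain ⟨M', hsub, hcard'⟩ := Finset.exists_subset_card_eq hk'
  exact ⟨M', hM.subset hsub, hcard'⟩

lemma mim_cut_le_mw (G : SimpleGraph V) (σ : V ≃ Fin (Fintype.card V)) {i : ℕ}
    (hi : i ∈ Finset.Ico 1 (Fintype.card V)) : mim (cutGraph G σ i) ≤ mw G σ :=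
  Finset.le_sup (f := fun i => mim (cutGraph G σ i)) hi

lemma mw_le {G : SimpleGraph V} {σ : V ≃ Fin (Fintype.card V)} {m : ℕ}
    (h : ∀ i ∈ Finset.Ico 1 (Fintype.card V), mim (cutGraph G σ i) ≤ m) : mw G σ ≤ m :=
  Finset.sup_le h

lemma exists_cut_of_le_mw {G : SimpleGraph V} {σ : V ≃ Fin (Fintype.card V)} {k : ℕ}
    (hk : 1 ≤ k) (h : k ≤ mw G σ) :
    ∃ i ∈ Finset.Ico 1 (Fintype.card V), k ≤ mim (cutGraph G σ i) :=
  (Finset.le_sup_iff (show (⊥ : ℕ) < k from hk)).1 h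

lemma lmw_le (G : SimpleGraph V) (σ : V ≃ Fin (Fintype.card V)) : lmw G ≤ mw G σ :=
  csInf_le (OrderBot.bddBelow _) ⟨σ, rfl⟩

lemma le_lmw (G : SimpleGraph V) {k : ℕ} (h : ∀ σ : V ≃ Fin (Fintype.card V), k ≤ mw G σ) :
    k ≤ lmw G := by
  refine le_csInf ⟨mw G (Fintype.equivFin V), Fintype.equivFin V, rfl⟩ ?_
  rintro m ⟨σ, rfl⟩
  exact h σ

/-- Any walk from the left side to the right side of a cut contains a crossing edge. -/
lemma walk_crossing {G : SimpleGraph V} (σ : V ≃ Fin (Fintype.card V)) (i : ℕ) :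
    ∀ {x y : V} (p : G.Walk x y), (σ x : ℕ) < i → i ≤ (σ y : ℕ) →
    ∃ a b, G.Adj a b ∧ (σ a : ℕ) < i ∧ i ≤ (σ b : ℕ) ∧ a ∈ p.support ∧ b ∈ p.support := by
  intro x y p
  induction p with
  | nil => intro h1 h2; omega
  | @cons x z y hadj q ih =>
    intro hx hy
    by_cases hz : (σ z : ℕ) < i
    · obtain ⟨a, b, h1, h2, h3, h4, h5⟩ := ih hz hy
      exact ⟨a, b, h1, h2, h3, by simp [h4], by simp [h5]⟩
    · exact ⟨x, z, hadj, hx, by omega, by simp, by simp⟩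

/-- Construct a layout from an injective position function. -/
def layoutOfPos (pos : V → ℕ) (hlt : ∀ v, pos v < Fintype.card V)
    (hinj : Function.Injective pos) : V ≃ Fin (Fintype.card V) :=
  Equiv.ofBijective (fun v => (⟨pos v, hlt v⟩ : Fin (Fintype.card V)))
    ((Fintype.bijective_iff_injective_and_card _).2
      ⟨fun a b hab => hinj (by simpa using congrArg Fin.val hab), by simp⟩)

@[simp] lemma layoutOfPos_apply (pos : V → ℕ) (hlt : ∀ v, pos v < Fintype.card V)
    (hinj : Function.Injective pos) (v : V) :
    ((layoutOfPos pos hlt hinj) v : ℕ) = pos v := rfl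




variable {V : Type*} [Fintype V] {W : Type*} [Fintype W]

section Restrict

variable (σ : V ≃ Fin (Fintype.card V)) (f : W → V) (hf : Function.Injective f)

/-- The position finset of the image of `f` in the layout `σ`. -/
def posSet : Finset ℕ := Finset.univ.image fun a : W => ((σ (f a) : ℕ))

include hf in
lemma posSet_card : (posSet σ f).card = Fintype.card W := by
  rw [posSet, Finset.card_image_of_injective _
    (fun a b hab => hf (σ.injective (Fin.val_injective hab)))]
  simp

/-- The layout of `W` induced by the layout `σ` of `V` via the injection `f`. -/
def restrictLayout : W ≃ Fin (Fintype.card W) :=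
  layoutOfPos (fun a => (((posSet σ f).orderIsoOfFin (posSet_card σ f hf)).symm
      ⟨(σ (f a) : ℕ), by simp [posSet]⟩ : ℕ))
    (fun a => Fin.is_lt _)
    (fun a b hab => by
      have h1 : (((posSet σ f).orderIsoOfFin (posSet_card σ f hf)).symm
          ⟨(σ (f a) : ℕ), by simp [posSet]⟩) = (((posSet σ f).orderIsoOfFin (posSet_card σ f hf)).symm
          ⟨(σ (f b) : ℕ), by simp [posSet]⟩) := Fin.val_injective hab
      have h2 := congrArg ((posSet σ f).orderIsoOfFin (posSet_card σ f hf)) h1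
      simp only [OrderIso.apply_symm_apply] at h2
      have h3 : ((σ (f a) : ℕ)) = ((σ (f b) : ℕ)) := congrArg Subtype.val h2
      exact hf (σ.injective (Fin.val_injective h3)))

lemma restrictLayout_lt_iff (a b : W) :
    ((restrictLayout σ f hf a : ℕ) < (restrictLayout σ f hf b : ℕ)) ↔
      ((σ (f a) : ℕ) < (σ (f b) : ℕ)) := by
  show (((posSet σ f).orderIsoOfFin (posSet_card σ f hf)).symm ⟨(σ (f a) : ℕ), by simp [posSet]⟩ : ℕ) <
    (((posSet σ f).orderIsoOfFin (posSet_card σ f hf)).symm ⟨(σ (f b) : ℕ), by simp [posSet]⟩ : ℕ) ↔ _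
  rw [← Fin.lt_def]
  rw [OrderIso.lt_iff_lt (((posSet σ f).orderIsoOfFin (posSet_card σ f hf)).symm)]
  exact Subtype.mk_lt_mk

lemma restrictLayout_le_iff (a b : W) :
    ((restrictLayout σ f hf a : ℕ) ≤ (restrictLayout σ f hf b : ℕ)) ↔
      ((σ (f a) : ℕ) ≤ (σ (f b) : ℕ)) := by
  have h1 := restrictLayout_lt_iff σ f hf a b
  have h2 := restrictLayout_lt_iff σ f hf b a
  omega

lemma restrict_cut_global {j : ℕ} (hj : j ∈ Finset.Ico 1 (Fintype.card W)) :
    ∃ p : ℕ, 1 ≤ p ∧ p < Fintype.card V ∧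
      ∀ a : W, ((restrictLayout σ f hf a : ℕ) < j ↔ (σ (f a) : ℕ) < p) := by
  rw [Finset.mem_Ico] at hj
  obtain ⟨hj1, hj2⟩ := hj
  set τ := restrictLayout σ f hf with hτ
  set w := τ.symm ⟨j - 1, by omega⟩ with hw
  set w' := τ.symm ⟨j, by omega⟩ with hw'
  have hwv : ((τ w : Fin (Fintype.card W)) : ℕ) = j - 1 := by
    rw [hw, Equiv.apply_symm_apply]
  have hwv' : ((τ w' : Fin (Fintype.card W)) : ℕ) = j := by
    rw [hw', Equiv.apply_symm_apply]
  refine ⟨(σ (f w) : ℕ) + 1, by omega, ?_, ?_⟩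
  · have h1 : ((τ w : Fin (Fintype.card W)) : ℕ) < ((τ w' : Fin (Fintype.card W)) : ℕ) := by
      omega
    have h2 := (restrictLayout_lt_iff σ f hf w w').1 h1
    have h3 := (σ (f w')).is_lt
    omega
  · intro a
    constructor
    · intro h
      have h1 : ((τ a : Fin (Fintype.card W)) : ℕ) ≤ ((τ w : Fin (Fintype.card W)) : ℕ) := by
        omega
      have := (restrictLayout_le_iff σ f hf a w).1 h1
      omega
    · intro h
      have h1 : (σ (f a) : ℕ) ≤ (σ (f w) : ℕ) := by omega
      have h2 : ((τ a : Fin (Fintype.card W)) : ℕ) ≤ ((τ w : Fin (Fintype.card W)) : ℕ) :=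
        (restrictLayout_le_iff σ f hf a w).2 h1
      omega

end Restrict

section Transport

variable {H : SimpleGraph W} {G : SimpleGraph V} {f : W → V}
  {σ : V ≃ Fin (Fintype.card V)} {τ : W ≃ Fin (Fintype.card W)} {i j : ℕ}

/-- Transport an induced matching of a cut of `H` to one of a cut of `G`,
along an embedding `f` of `H` into `G` as an induced subgraph, assuming the cuts
are compatible. -/
lemma transport_matching_up (hfinj : Function.Injective f)
    (hadj : ∀ a b : W, G.Adj (f a) (f b) ↔ H.Adj a b)
    (hcut : ∀ a : W, ((τ a : ℕ) < j ↔ (σ (f a) : ℕ) < i))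
    {M : Finset (Sym2 W)} (hM : IsInducedMatching (cutGraph H τ j) M) :
    ∃ M' : Finset (Sym2 V), IsInducedMatching (cutGraph G σ i) M' ∧ M'.card = M.card ∧
      ∀ e ∈ M', ∀ x ∈ e, ∃ a : W, x = f a := by
  have hcut' : ∀ a : W, (j ≤ (τ a : ℕ) ↔ i ≤ (σ (f a) : ℕ)) := by
    intro a; have := hcut a; omega
  have hsyminj : Function.Injective (Sym2.map f) := Sym2.map.injective hfinj
  classical
  refine ⟨M.image (Sym2.map f), ?_, ?_, ?_⟩
  · constructor
    · intro e he
      simp only [Finset.coe_image, Set.mem_image, Finset.mem_coe] at he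
      obtain ⟨e', he', rfl⟩ := he
      induction e' using Sym2.ind with
      | _ a b =>
        have := hM.1 (Finset.mem_coe.2 he')
        rw [SimpleGraph.mem_edgeSet] at this
        rw [Sym2.map_pair_eq, SimpleGraph.mem_edgeSet]
        obtain ⟨h1, h2⟩ := this
        refine ⟨(hadj a b).2 h1, ?_⟩
        rcases h2 with ⟨h2, h3⟩ | ⟨h2, h3⟩
        · exact Or.inl ⟨(hcut a).1 h2, (hcut' b).1 h3⟩
        · exact Or.inr ⟨(hcut b).1 h2, (hcut' a).1 h3⟩
    · intro e he g hg hne x hx y hy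
      simp only [Finset.mem_image] at he hg
      obtain ⟨e', he', rfl⟩ := he
      obtain ⟨g', hg', rfl⟩ := hg
      have hne' : e' ≠ g' := fun h => hne (by rw [h])
      induction e' using Sym2.ind with
      | _ a b =>
        induction g' using Sym2.ind with
        | _ c d =>
          rw [Sym2.map_pair_eq, Sym2.mem_iff] at hx hy
          -- x = f a or f b, y = f c or f d
          have key : ∀ (p q : W), p ∈ (s(a, b)) → q ∈ (s(c, d)) →
              f p ≠ f q ∧ ¬ (cutGraph G σ i).Adj (f p) (f q) := by
            intro p q hp hq
            have h := hM.2 _ he' _ hg' hne' p hp q hq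
            refine ⟨fun hc => h.1 (hfinj hc), fun hc => h.2 ?_⟩
            obtain ⟨h1, h2⟩ := hc
            refine ⟨(hadj p q).1 h1, ?_⟩
            rcases h2 with ⟨h2, h3⟩ | ⟨h2, h3⟩
            · exact Or.inl ⟨(hcut p).2 h2, (hcut' q).2 h3⟩
            · exact Or.inr ⟨(hcut q).2 h2, (hcut' p).2 h3⟩
          rcases hx with rfl | rfl <;> rcases hy with rfl | rfl
          · exact key a c (by simp) (by simp)
          · exact key a d (by simp) (by simp)
          · exact key b c (by simp) (by simp)
          · exact key b d (by simp) (by simp)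
  · exact Finset.card_image_of_injective _ hsyminj
  · intro e he x hx
    obtain ⟨e0, _, rfl⟩ := Finset.mem_image.1 he
    rw [Sym2.mem_map] at hx
    obtain ⟨a, _, rfl⟩ := hx
    exact ⟨a, rfl⟩

/-- Transport an induced matching of a cut of `G` whose edges lie inside the image of `f`
down to an induced matching of a compatible cut of `H`. -/
lemma transport_matching_down (hfinj : Function.Injective f) (g : V → W)
    (hgf : ∀ a, g (f a) = a)
    (hadj : ∀ a b : W, G.Adj (f a) (f b) ↔ H.Adj a b)
    (hcut : ∀ a : W, ((τ a : ℕ) < j ↔ (σ (f a) : ℕ) < i))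
    {M : Finset (Sym2 V)} (hM : IsInducedMatching (cutGraph G σ i) M)
    (hrange : ∀ e ∈ M, ∀ x ∈ e, x ∈ Set.range f) :
    ∃ M' : Finset (Sym2 W), IsInducedMatching (cutGraph H τ j) M' ∧ M'.card = M.card := by
  have hcut' : ∀ a : W, (j ≤ (τ a : ℕ) ↔ i ≤ (σ (f a) : ℕ)) := by
    intro a; have := hcut a; omega
  -- every edge of M is the image under Sym2.map f of some Sym2 W
  have hrep : ∀ e ∈ M, ∃ a b : W, e = s(f a, f b) := by
    intro e he
    induction e using Sym2.ind with
    | _ x y =>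
      obtain ⟨a, rfl⟩ := hrange _ he x (by simp)
      obtain ⟨b, rfl⟩ := hrange _ he y (by simp)
      exact ⟨a, b, rfl⟩
  have hfg : ∀ e ∈ M, Sym2.map f (Sym2.map g e) = e := by
    intro e he
    obtain ⟨a, b, rfl⟩ := hrep e he
    simp [Sym2.map_pair_eq, hgf]
  have hinjOn : Set.InjOn (Sym2.map g) M := by
    intro e he e' he' hee
    rw [← hfg e he, ← hfg e' he', hee]
  classical
  refine ⟨M.image (Sym2.map g), ?_, ?_⟩
  · constructor
    · intro e he
      simp only [Finset.coe_image, Set.mem_image, Finset.mem_coe] at he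
      obtain ⟨e', he', rfl⟩ := he
      obtain ⟨a, b, rfl⟩ := hrep e' he'
      have := hM.1 (Finset.mem_coe.2 he')
      rw [SimpleGraph.mem_edgeSet] at this
      obtain ⟨h1, h2⟩ := this
      rw [Sym2.map_pair_eq, hgf, hgf, SimpleGraph.mem_edgeSet]
      refine ⟨(hadj a b).1 h1, ?_⟩
      rcases h2 with ⟨h2, h3⟩ | ⟨h2, h3⟩
      · exact Or.inl ⟨(hcut a).2 h2, (hcut' b).2 h3⟩
      · exact Or.inr ⟨(hcut b).2 h2, (hcut' a).2 h3⟩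
    · intro e he g' hg' hne x hx y hy
      simp only [Finset.mem_image] at he hg'
      obtain ⟨e1, he1, rfl⟩ := he
      obtain ⟨e2, he2, rfl⟩ := hg'
      obtain ⟨a, b, rfl⟩ := hrep e1 he1
      obtain ⟨c, d, rfl⟩ := hrep e2 he2
      have hne' : s(f a, f b) ≠ s(f c, f d) := by
        intro h; exact hne (by rw [h])
      rw [Sym2.map_pair_eq, hgf, hgf, Sym2.mem_iff] at hx hy
      have key : ∀ (p q : W), f p ∈ (s(f a, f b)) → f q ∈ (s(f c, f d)) →
          p ≠ q ∧ ¬ (cutGraph H τ j).Adj p q := by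
        intro p q hp hq
        have h := hM.2 _ he1 _ he2 hne' (f p) hp (f q) hq
        refine ⟨fun hc => h.1 (by rw [hc]), fun hc => h.2 ?_⟩
        obtain ⟨h1, h2⟩ := hc
        refine ⟨(hadj p q).2 h1, ?_⟩
        rcases h2 with ⟨h2, h3⟩ | ⟨h2, h3⟩
        · exact Or.inl ⟨(hcut p).1 h2, (hcut' q).1 h3⟩
        · exact Or.inr ⟨(hcut q).1 h2, (hcut' p).1 h3⟩
      have hx' : f x ∈ (s(f a, f b)) := by rcases hx with rfl | rfl <;> simp
      have hy' : f y ∈ (s(f c, f d)) := by rcases hy with rfl | rfl <;> simp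
      exact key x y hx' hy'
  · exact Finset.card_image_of_injOn hinjOn

end Transport




/-- Vertex type pattern of `L (k+1)` over the copy vertex type `W`. -/
abbrev VT (W : Type*) := Unit ⊕ (Fin 3 × (Unit ⊕ W))

variable {W : Type*} [Fintype W]

def uu : VT W := Sum.inl ()
def vv (i : Fin 3) : VT W := Sum.inr (i, Sum.inl ())
def cc (i : Fin 3) (a : W) : VT W := Sum.inr (i, Sum.inr a)

lemma cc_injective (i : Fin 3) : Function.Injective (cc (W := W) i) := by
  intro a b h
  simpa [cc] using h

lemma vt_cases (x : VT W) : x = uu ∨ (∃ i, x = vv i) ∨ (∃ i a, x = cc i a) := by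
  rcases x with _ | ⟨i, _ | a⟩
  · exact Or.inl rfl
  · exact Or.inr (Or.inl ⟨i, rfl⟩)
  · exact Or.inr (Or.inr ⟨i, a, rfl⟩)

@[simp] lemma uu_ne_vv (i : Fin 3) : (uu : VT W) ≠ vv i := by simp [uu, vv]
@[simp] lemma uu_ne_cc (i : Fin 3) (a : W) : (uu : VT W) ≠ cc i a := by simp [uu, cc]
@[simp] lemma vv_ne_uu (i : Fin 3) : (vv i : VT W) ≠ uu := by simp [uu, vv]
@[simp] lemma cc_ne_uu (i : Fin 3) (a : W) : (cc i a : VT W) ≠ uu := by simp [uu, cc]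
@[simp] lemma vv_ne_cc (i j : Fin 3) (a : W) : (vv i : VT W) ≠ cc j a := by simp [vv, cc]
@[simp] lemma cc_ne_vv (i j : Fin 3) (a : W) : (cc i a : VT W) ≠ vv j := by simp [vv, cc]
@[simp] lemma vv_inj_iff (i j : Fin 3) : (vv i : VT W) = vv j ↔ i = j := by simp [vv]
@[simp] lemma cc_inj_iff (i j : Fin 3) (a b : W) : (cc i a : VT W) = cc j b ↔ i = j ∧ a = b := by
  simp [cc]

lemma card_VT : Fintype.card (VT W) = 3 * Fintype.card W + 4 := by
  simp [VT]
  ring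

/-- The common adjacency structure of `L (k+1)` and of its square, over the copy graph `H`.
`PA a` says that `u` is adjacent to the copy vertex `a` (of each copy), `PB a` says
that `vᵢ` is adjacent to vertex `a` of copy `i`, and `s` says the `vᵢ` are pairwise
adjacent. -/
structure Framework (H : SimpleGraph W) (G : SimpleGraph (VT W)) (r : W)
    (PA PB : W → Prop) (s : Prop) : Prop where
  adj_uv : ∀ i, G.Adj uu (vv i)
  adj_vv : ∀ i j, G.Adj (vv i) (vv j) ↔ (s ∧ i ≠ j)
  adj_uc : ∀ i a, G.Adj uu (cc i a) ↔ PA a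
  adj_vc : ∀ i j a, G.Adj (vv i) (cc j a) ↔ (i = j ∧ PB a)
  adj_cc : ∀ i j a b, G.Adj (cc i a) (cc j b) ↔ (i = j ∧ H.Adj a b)
  hPA : ∀ a, PA a → a = r
  hPBr : PB r
  hcase : (∀ a, ¬ PA a) ∨ s

namespace Framework

variable {H : SimpleGraph W} {G : SimpleGraph (VT W)} {r : W} {PA PB : W → Prop} {s : Prop}

lemma adj_cc_ne (F : Framework H G r PA PB s) {i j : Fin 3} {a b : W} (hij : i ≠ j) :
    ¬ G.Adj (cc i a) (cc j b) := fun h => hij ((F.adj_cc i j a b).1 h).1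

lemma adj_vc_ne (F : Framework H G r PA PB s) {i j : Fin 3} {a : W} (hij : i ≠ j) :
    ¬ G.Adj (vv i) (cc j a) := fun h => hij ((F.adj_vc i j a).1 h).1

end Framework




variable {W : Type*} [Fintype W]

lemma fin3 (p : Fin 3) : p = 0 ∨ p = 1 ∨ p = 2 := by omega

/-- Offsets of the three copies in the canonical layout. -/
def ofs (n : ℕ) : Fin 3 → ℕ := ![1, n + 2, 2 * n + 4]
/-- Positions of the three stem vertices in the canonical layout. -/
def pvv (n : ℕ) : Fin 3 → ℕ := ![n + 1, 2 * n + 2, 2 * n + 3]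

@[simp] lemma ofs_zero (n : ℕ) : ofs n 0 = 1 := rfl
@[simp] lemma ofs_one (n : ℕ) : ofs n 1 = n + 2 := rfl
@[simp] lemma ofs_two (n : ℕ) : ofs n 2 = 2 * n + 4 := rfl
@[simp] lemma pvv_zero (n : ℕ) : pvv n 0 = n + 1 := rfl
@[simp] lemma pvv_one (n : ℕ) : pvv n 1 = 2 * n + 2 := rfl
@[simp] lemma pvv_two (n : ℕ) : pvv n 2 = 2 * n + 3 := rfl

lemma pvv_le (n : ℕ) (p : Fin 3) : pvv n p ≤ 2 * n + 3 := by
  rcases fin3 p with rfl | rfl | rfl <;> simp <;> omega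

/-- The canonical position function: `u`, copy 0, `v₀`, copy 1, `v₁`, `v₂`, copy 2. -/
def upos (σH : W ≃ Fin (Fintype.card W)) : VT W → ℕ
  | Sum.inl _ => 0
  | Sum.inr (i, Sum.inl _) => pvv (Fintype.card W) i
  | Sum.inr (i, Sum.inr a) => ofs (Fintype.card W) i + (σH a : ℕ)

variable (σH : W ≃ Fin (Fintype.card W))

@[simp] lemma upos_uu : upos σH uu = 0 := rfl
@[simp] lemma upos_vv (i : Fin 3) : upos σH (vv i) = pvv (Fintype.card W) i := rfl
@[simp] lemma upos_cc (i : Fin 3) (a : W) :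
    upos σH (cc i a) = ofs (Fintype.card W) i + (σH a : ℕ) := rfl

lemma upos_lt : ∀ x : VT W, upos σH x < Fintype.card (VT W) := by
  intro x
  rw [card_VT]
  rcases vt_cases x with rfl | ⟨i, rfl⟩ | ⟨i, a, rfl⟩
  · simp
  · have := pvv_le (Fintype.card W) i
    simp; omega
  · have := (σH a).is_lt
    rcases fin3 i with rfl | rfl | rfl <;> simp <;> omega

lemma upos_inj : Function.Injective (upos σH) := by
  intro x y h
  rcases vt_cases x with rfl | ⟨i, rfl⟩ | ⟨i, a, rfl⟩ <;>
    rcases vt_cases y with rfl | ⟨j, rfl⟩ | ⟨j, b, rfl⟩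
  · rfl
  · exfalso
    rcases fin3 j with rfl | rfl | rfl <;> simp at h
  · exfalso
    have := (σH b).is_lt
    rcases fin3 j with rfl | rfl | rfl <;> simp at h <;> omega
  · exfalso
    rcases fin3 i with rfl | rfl | rfl <;> simp at h
  · have : i = j := by
      by_contra hij
      rcases fin3 i with rfl | rfl | rfl <;> rcases fin3 j with rfl | rfl | rfl <;>
        simp at h hij <;> omega
    subst this; rfl
  · exfalso
    have := (σH b).is_lt
    rcases fin3 i with rfl | rfl | rfl <;> rcases fin3 j with rfl | rfl | rfl <;>
      simp at h <;> omega
  · exfalso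
    have := (σH a).is_lt
    rcases fin3 i with rfl | rfl | rfl <;> simp at h <;> omega
  · exfalso
    have := (σH a).is_lt
    rcases fin3 i with rfl | rfl | rfl <;> rcases fin3 j with rfl | rfl | rfl <;>
      simp at h <;> omega
  · have hij : i = j := by
      by_contra hij
      have := (σH a).is_lt
      have := (σH b).is_lt
      rcases fin3 i with rfl | rfl | rfl <;> rcases fin3 j with rfl | rfl | rfl <;>
        simp at h hij <;> omega
    subst hij
    have : (σH a : ℕ) = (σH b : ℕ) := by
      rcases fin3 i with rfl | rfl | rfl <;> simp at h <;> omega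
    rw [cc_inj_iff]
    exact ⟨rfl, σH.injective (Fin.val_injective this)⟩

/-- The canonical layout of `VT W` built on a layout of `W`. -/
def ulayout : VT W ≃ Fin (Fintype.card (VT W)) :=
  layoutOfPos (upos σH) (upos_lt σH) (upos_inj σH)

@[simp] lemma ulayout_apply (x : VT W) : ((ulayout σH) x : ℕ) = upos σH x := rfl




variable {W : Type*} [Fintype W]
variable {H : SimpleGraph W} {G : SimpleGraph (VT W)} {r : W} {PA PB : W → Prop} {s : Prop}
variable {σH : W ≃ Fin (Fintype.card W)}

lemma P24 {p : Fin 3} {c i n : ℕ} (h1 : pvv n p < i) (h2 : i ≤ ofs n p + c) (hc : c < n) :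
    p = 2 ∧ 2 * n + 4 ≤ i := by
  rcases fin3 p with rfl | rfl | rfl <;> simp at h1 h2 <;> [omega; omega; exact ⟨rfl, by omega⟩]

/-- Shapes of crossing edges not inside a single copy. -/
lemma rest_shape (F : Framework H G r PA PB s) (hroot : (σH r : ℕ) = 0) {i : ℕ}
    {e : Sym2 (VT W)} (he : e ∈ (cutGraph G (ulayout σH) i).edgeSet)
    (hrest : ¬ ∃ (m : Fin 3) (a b : W), e = s(cc m a, cc m b)) :
    (∃ t, e = s((uu : VT W), vv t) ∧ 1 ≤ i ∧ i ≤ pvv (Fintype.card W) t) ∨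
    (∃ t, e = s((uu : VT W), cc t r) ∧ PA r ∧ 1 ≤ i ∧ i ≤ ofs (Fintype.card W) t) ∨
    (∃ t t', e = s(vv t, (vv t' : VT W)) ∧ s ∧
      pvv (Fintype.card W) t < i ∧ i ≤ pvv (Fintype.card W) t') ∨
    (∃ t a, e = s(vv t, (cc t a : VT W)) ∧ PB a ∧
      pvv (Fintype.card W) t < i ∧ i ≤ ofs (Fintype.card W) t + (σH a : ℕ)) ∨
    (∃ t a, e = s(vv t, (cc t a : VT W)) ∧ PB a ∧
      ofs (Fintype.card W) t + (σH a : ℕ) < i ∧ i ≤ pvv (Fintype.card W) t) := by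
  induction e using Sym2.ind with
  | _ x y =>
    rw [SimpleGraph.mem_edgeSet] at he
    obtain ⟨hadj, hcr⟩ := he
    simp only [ulayout_apply] at hcr
    rcases vt_cases x with rfl | ⟨p, rfl⟩ | ⟨p, a, rfl⟩ <;>
      rcases vt_cases y with rfl | ⟨q, rfl⟩ | ⟨q, b, rfl⟩
    · exact absurd hadj G.irrefl
    · -- uu, vv q
      refine Or.inl ⟨q, rfl, ?_, ?_⟩ <;> simp only [upos_uu, upos_vv] at hcr <;> omega
    · -- uu, cc q b
      have hb : PA b := (F.adj_uc q b).1 hadj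
      have hbr := F.hPA b hb
      subst hbr
      refine Or.inr (Or.inl ⟨q, rfl, hb, ?_, ?_⟩) <;>
        simp only [upos_uu, upos_cc, hroot] at hcr ⊢ <;> omega
    · -- vv p, uu
      rw [Sym2.eq_swap]
      refine Or.inl ⟨p, rfl, ?_, ?_⟩ <;> simp only [upos_uu, upos_vv] at hcr <;> omega
    · -- vv p, vv q
      have hs := (F.adj_vv p q).1 hadj
      simp only [upos_vv] at hcr
      rcases hcr with ⟨h1, h2⟩ | ⟨h1, h2⟩
      · exact Or.inr (Or.inr (Or.inl ⟨p, q, rfl, hs.1, h1, h2⟩))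
      · rw [Sym2.eq_swap]
        exact Or.inr (Or.inr (Or.inl ⟨q, p, rfl, hs.1, h1, h2⟩))
    · -- vv p, cc q b
      obtain ⟨hpq, hB⟩ := (F.adj_vc p q b).1 hadj
      subst hpq
      simp only [upos_vv, upos_cc] at hcr
      rcases hcr with ⟨h1, h2⟩ | ⟨h1, h2⟩
      · exact Or.inr (Or.inr (Or.inr (Or.inl ⟨p, b, rfl, hB, h1, h2⟩)))
      · exact Or.inr (Or.inr (Or.inr (Or.inr ⟨p, b, rfl, hB, h1, h2⟩)))
    · -- cc p a, uu
      have hb : PA a := (F.adj_uc p a).1 hadj.symm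
      have hbr := F.hPA a hb
      subst hbr
      rw [Sym2.eq_swap]
      refine Or.inr (Or.inl ⟨p, rfl, hb, ?_, ?_⟩) <;>
        simp only [upos_uu, upos_cc, hroot] at hcr ⊢ <;> omega
    · -- cc p a, vv q
      obtain ⟨hpq, hB⟩ := (F.adj_vc q p a).1 hadj.symm
      subst hpq
      rw [Sym2.eq_swap]
      simp only [upos_vv, upos_cc] at hcr
      rcases hcr with ⟨h1, h2⟩ | ⟨h1, h2⟩
      · exact Or.inr (Or.inr (Or.inr (Or.inr ⟨q, a, rfl, hB, h1, h2⟩)))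
      · exact Or.inr (Or.inr (Or.inr (Or.inl ⟨q, a, rfl, hB, h1, h2⟩)))
    · -- cc p a, cc q b
      obtain ⟨hpq, _⟩ := (F.adj_cc p q a b).1 hadj
      subst hpq
      exact absurd ⟨p, a, b, rfl⟩ hrest

/-- Any two distinct "rest" edges of an induced matching of a cut of the canonical
layout are in conflict. -/
lemma rest_pair (F : Framework H G r PA PB s) (hroot : (σH r : ℕ) = 0) {i : ℕ}
    {M : Finset (Sym2 (VT W))} (hM : IsInducedMatching (cutGraph G (ulayout σH) i) M)
    {e f : Sym2 (VT W)} (he : e ∈ M) (hf : f ∈ M) (hef : e ≠ f)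
    (hre : ¬ ∃ (m : Fin 3) (a b : W), e = s(cc m a, cc m b))
    (hrf : ¬ ∃ (m : Fin 3) (a b : W), f = s(cc m a, cc m b)) : False := by
  have mc := hM.2 e he f hf hef
  have blk : ∀ p q : VT W, p ∈ e → q ∈ f → G.Adj p q →
      upos σH p < i → i ≤ upos σH q → False := by
    intro p q hp hq ha h1 h2
    exact (mc p hp q hq).2 ⟨ha, Or.inl ⟨by simpa using h1, by simpa using h2⟩⟩
  have blk2 : ∀ p q : VT W, p ∈ e → q ∈ f → G.Adj p q →
      upos σH q < i → i ≤ upos σH p → False := by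
    intro p q hp hq ha h1 h2
    exact (mc p hp q hq).2 ⟨ha, Or.inr ⟨by simpa using h1, by simpa using h2⟩⟩
  have shr : ∀ p : VT W, p ∈ e → p ∈ f → False := fun p hp hq => (mc p hp p hq).1 rfl
  have hse := rest_shape F hroot (hM.1 he) hre
  have hsf := rest_shape F hroot (hM.1 hf) hrf
  rcases hse with ⟨te, he1, hie1, hie2⟩ | ⟨te, he1, hPAe, hie1, hie2⟩ |
      ⟨te, te', he1, hse', hie1, hie2⟩ | ⟨te, ae, he1, hBe, hie1, hie2⟩ |
      ⟨te, ae, he1, hBe, hie1, hie2⟩ <;>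
    rcases hsf with ⟨tf, hf1, hif1, hif2⟩ | ⟨tf, hf1, hPAf, hif1, hif2⟩ |
      ⟨tf, tf', hf1, hsf', hif1, hif2⟩ | ⟨tf, af, hf1, hBf, hif1, hif2⟩ |
      ⟨tf, af, hf1, hBf, hif1, hif2⟩
  -- (1,1)
  · exact shr uu (by rw [he1]; simp) (by rw [hf1]; simp)
  -- (1,2)
  · exact shr uu (by rw [he1]; simp) (by rw [hf1]; simp)
  -- (1,3)
  · exact blk uu (vv tf') (by rw [he1]; simp) (by rw [hf1]; simp) (F.adj_uv tf')
      (by simp only [ulayout_apply, upos_uu, upos_vv, upos_cc, ofs_zero, ofs_one, ofs_two, pvv_zero, pvv_one, pvv_two, hroot] at hie1 hie2 hif1 hif2 ⊢ <;> omega) (by simp only [ulayout_apply, upos_uu, upos_vv, upos_cc, ofs_zero, ofs_one, ofs_two, pvv_zero, pvv_one, pvv_two, hroot] at hie1 hie2 hif1 hif2 ⊢ <;> omega)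
  -- (1,4)
  · obtain ⟨rfl, h24⟩ := P24 hif1 hif2 (σH af).is_lt
    have := pvv_le (Fintype.card W) te
    omega
  -- (1,5)
  · exact blk uu (vv tf) (by rw [he1]; simp) (by rw [hf1]; simp) (F.adj_uv tf)
      (by simp only [ulayout_apply, upos_uu, upos_vv, upos_cc, ofs_zero, ofs_one, ofs_two, pvv_zero, pvv_one, pvv_two, hroot] at hie1 hie2 hif1 hif2 ⊢ <;> omega) (by simp only [ulayout_apply, upos_uu, upos_vv, upos_cc, ofs_zero, ofs_one, ofs_two, pvv_zero, pvv_one, pvv_two, hroot] at hie1 hie2 hif1 hif2 ⊢ <;> omega)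
  -- (2,1)
  · exact blk uu (vv tf) (by rw [he1]; simp) (by rw [hf1]; simp) (F.adj_uv tf)
      (by simp only [ulayout_apply, upos_uu, upos_vv, upos_cc, ofs_zero, ofs_one, ofs_two, pvv_zero, pvv_one, pvv_two, hroot] at hie1 hie2 hif1 hif2 ⊢ <;> omega) (by simp only [ulayout_apply, upos_uu, upos_vv, upos_cc, ofs_zero, ofs_one, ofs_two, pvv_zero, pvv_one, pvv_two, hroot] at hie1 hie2 hif1 hif2 ⊢ <;> omega)
  -- (2,2)
  · exact shr uu (by rw [he1]; simp) (by rw [hf1]; simp)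
  -- (2,3)
  · exact blk uu (vv tf') (by rw [he1]; simp) (by rw [hf1]; simp) (F.adj_uv tf')
      (by simp only [ulayout_apply, upos_uu, upos_vv, upos_cc, ofs_zero, ofs_one, ofs_two, pvv_zero, pvv_one, pvv_two, hroot] at hie1 hie2 hif1 hif2 ⊢ <;> omega) (by simp only [ulayout_apply, upos_uu, upos_vv, upos_cc, ofs_zero, ofs_one, ofs_two, pvv_zero, pvv_one, pvv_two, hroot] at hie1 hie2 hif1 hif2 ⊢ <;> omega)
  -- (2,4)
  · obtain ⟨rfl, h24⟩ := P24 hif1 hif2 (σH af).is_lt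
    have hte : te = 2 := by
      rcases fin3 te with rfl | rfl | rfl
      · exfalso; simp at hie2; omega
      · exfalso; simp at hie2; omega
      · rfl
    subst hte
    refine blk2 (cc 2 r) (vv 2) (by rw [he1]; simp) (by rw [hf1]; simp)
      ((F.adj_vc 2 2 r).2 ⟨rfl, F.hPBr⟩).symm (by simp only [ulayout_apply, upos_uu, upos_vv, upos_cc, ofs_zero, ofs_one, ofs_two, pvv_zero, pvv_one, pvv_two, hroot] at hie1 hie2 hif1 hif2 ⊢ <;> omega) (by simp only [ulayout_apply, upos_uu, upos_vv, upos_cc, ofs_zero, ofs_one, ofs_two, pvv_zero, pvv_one, pvv_two, hroot] at hie1 hie2 hif1 hif2 ⊢ <;> omega)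
  -- (2,5)
  · exact blk uu (vv tf) (by rw [he1]; simp) (by rw [hf1]; simp) (F.adj_uv tf)
      (by simp only [ulayout_apply, upos_uu, upos_vv, upos_cc, ofs_zero, ofs_one, ofs_two, pvv_zero, pvv_one, pvv_two, hroot] at hie1 hie2 hif1 hif2 ⊢ <;> omega) (by simp only [ulayout_apply, upos_uu, upos_vv, upos_cc, ofs_zero, ofs_one, ofs_two, pvv_zero, pvv_one, pvv_two, hroot] at hie1 hie2 hif1 hif2 ⊢ <;> omega)
  -- (3,1)
  · have hne : te ≠ tf := by intro h; subst h; omega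
    exact blk (vv te) (vv tf) (by rw [he1]; simp) (by rw [hf1]; simp)
      ((F.adj_vv te tf).2 ⟨hse', hne⟩) (by simp only [ulayout_apply, upos_uu, upos_vv, upos_cc, ofs_zero, ofs_one, ofs_two, pvv_zero, pvv_one, pvv_two, hroot] at hie1 hie2 hif1 hif2 ⊢ <;> omega) (by simp only [ulayout_apply, upos_uu, upos_vv, upos_cc, ofs_zero, ofs_one, ofs_two, pvv_zero, pvv_one, pvv_two, hroot] at hie1 hie2 hif1 hif2 ⊢ <;> omega)
  -- (3,2)
  · exact blk2 (vv te') uu (by rw [he1]; simp) (by rw [hf1]; simp) (F.adj_uv te').symm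
      (by simp only [ulayout_apply, upos_uu, upos_vv, upos_cc, ofs_zero, ofs_one, ofs_two, pvv_zero, pvv_one, pvv_two, hroot] at hie1 hie2 hif1 hif2 ⊢ <;> omega) (by simp only [ulayout_apply, upos_uu, upos_vv, upos_cc, ofs_zero, ofs_one, ofs_two, pvv_zero, pvv_one, pvv_two, hroot] at hie1 hie2 hif1 hif2 ⊢ <;> omega)
  -- (3,3)
  · have hne : te ≠ tf' := by intro h; subst h; omega
    exact blk (vv te) (vv tf') (by rw [he1]; simp) (by rw [hf1]; simp)
      ((F.adj_vv te tf').2 ⟨hse', hne⟩) (by simp only [ulayout_apply, upos_uu, upos_vv, upos_cc, ofs_zero, ofs_one, ofs_two, pvv_zero, pvv_one, pvv_two, hroot] at hie1 hie2 hif1 hif2 ⊢ <;> omega) (by simp only [ulayout_apply, upos_uu, upos_vv, upos_cc, ofs_zero, ofs_one, ofs_two, pvv_zero, pvv_one, pvv_two, hroot] at hie1 hie2 hif1 hif2 ⊢ <;> omega)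
  -- (3,4)
  · obtain ⟨rfl, h24⟩ := P24 hif1 hif2 (σH af).is_lt
    have := pvv_le (Fintype.card W) te'
    omega
  -- (3,5)
  · have hne : te ≠ tf := by intro h; subst h; omega
    exact blk (vv te) (vv tf) (by rw [he1]; simp) (by rw [hf1]; simp)
      ((F.adj_vv te tf).2 ⟨hse', hne⟩) (by simp only [ulayout_apply, upos_uu, upos_vv, upos_cc, ofs_zero, ofs_one, ofs_two, pvv_zero, pvv_one, pvv_two, hroot] at hie1 hie2 hif1 hif2 ⊢ <;> omega) (by simp only [ulayout_apply, upos_uu, upos_vv, upos_cc, ofs_zero, ofs_one, ofs_two, pvv_zero, pvv_one, pvv_two, hroot] at hie1 hie2 hif1 hif2 ⊢ <;> omega)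
  -- (4,1)
  · obtain ⟨rfl, h24⟩ := P24 hie1 hie2 (σH ae).is_lt
    have := pvv_le (Fintype.card W) tf
    omega
  -- (4,2)
  · obtain ⟨rfl, h24⟩ := P24 hie1 hie2 (σH ae).is_lt
    have htf : tf = 2 := by
      rcases fin3 tf with rfl | rfl | rfl
      · exfalso; simp at hif2; omega
      · exfalso; simp at hif2; omega
      · rfl
    subst htf
    refine blk (vv 2) (cc 2 r) (by rw [he1]; simp) (by rw [hf1]; simp)
      ((F.adj_vc 2 2 r).2 ⟨rfl, F.hPBr⟩) (by simp only [ulayout_apply, upos_uu, upos_vv, upos_cc, ofs_zero, ofs_one, ofs_two, pvv_zero, pvv_one, pvv_two, hroot] at hie1 hie2 hif1 hif2 ⊢ <;> omega) (by simp only [ulayout_apply, upos_uu, upos_vv, upos_cc, ofs_zero, ofs_one, ofs_two, pvv_zero, pvv_one, pvv_two, hroot] at hie1 hie2 hif1 hif2 ⊢ <;> omega)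
  -- (4,3)
  · obtain ⟨rfl, h24⟩ := P24 hie1 hie2 (σH ae).is_lt
    have := pvv_le (Fintype.card W) tf'
    omega
  -- (4,4)
  · obtain ⟨rfl, h24⟩ := P24 hie1 hie2 (σH ae).is_lt
    obtain ⟨rfl, _⟩ := P24 hif1 hif2 (σH af).is_lt
    exact shr (vv 2) (by rw [he1]; simp) (by rw [hf1]; simp)
  -- (4,5)
  · obtain ⟨rfl, h24⟩ := P24 hie1 hie2 (σH ae).is_lt
    have := pvv_le (Fintype.card W) tf
    omega
  -- (5,1)
  · exact blk2 (vv te) uu (by rw [he1]; simp) (by rw [hf1]; simp) (F.adj_uv te).symm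
      (by simp only [ulayout_apply, upos_uu, upos_vv, upos_cc, ofs_zero, ofs_one, ofs_two, pvv_zero, pvv_one, pvv_two, hroot] at hie1 hie2 hif1 hif2 ⊢ <;> omega) (by simp only [ulayout_apply, upos_uu, upos_vv, upos_cc, ofs_zero, ofs_one, ofs_two, pvv_zero, pvv_one, pvv_two, hroot] at hie1 hie2 hif1 hif2 ⊢ <;> omega)
  -- (5,2)
  · exact blk2 (vv te) uu (by rw [he1]; simp) (by rw [hf1]; simp) (F.adj_uv te).symm
      (by simp only [ulayout_apply, upos_uu, upos_vv, upos_cc, ofs_zero, ofs_one, ofs_two, pvv_zero, pvv_one, pvv_two, hroot] at hie1 hie2 hif1 hif2 ⊢ <;> omega) (by simp only [ulayout_apply, upos_uu, upos_vv, upos_cc, ofs_zero, ofs_one, ofs_two, pvv_zero, pvv_one, pvv_two, hroot] at hie1 hie2 hif1 hif2 ⊢ <;> omega)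
  -- (5,3)
  · have hne : te ≠ tf := by intro h; subst h; omega
    exact blk2 (vv te) (vv tf) (by rw [he1]; simp) (by rw [hf1]; simp)
      ((F.adj_vv te tf).2 ⟨hsf', hne⟩) (by simp only [ulayout_apply, upos_uu, upos_vv, upos_cc, ofs_zero, ofs_one, ofs_two, pvv_zero, pvv_one, pvv_two, hroot] at hie1 hie2 hif1 hif2 ⊢ <;> omega) (by simp only [ulayout_apply, upos_uu, upos_vv, upos_cc, ofs_zero, ofs_one, ofs_two, pvv_zero, pvv_one, pvv_two, hroot] at hie1 hie2 hif1 hif2 ⊢ <;> omega)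
  -- (5,4)
  · obtain ⟨rfl, h24⟩ := P24 hif1 hif2 (σH af).is_lt
    have := pvv_le (Fintype.card W) te
    omega
  -- (5,5)
  · by_cases hte : te = tf
    · subst hte
      exact shr (vv te) (by rw [he1]; simp) (by rw [hf1]; simp)
    · have h1 := (σH ae).is_lt
      have h2 := (σH af).is_lt
      rcases fin3 te with rfl | rfl | rfl <;> rcases fin3 tf with rfl | rfl | rfl <;>
        simp at hie1 hie2 hif1 hif2 hte <;> omega




variable {W : Type*} [Fintype W]
variable {H : SimpleGraph W} {G : SimpleGraph (VT W)} {r : W} {PA PB : W → Prop} {s : Prop}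
variable {σH : W ≃ Fin (Fintype.card W)}

/-- A crossing edge inside copy `m` forces the cut to be strictly inside the block
of copy `m`. -/
lemma copy_cut (F : Framework H G r PA PB s) {i : ℕ} {m : Fin 3} {a b : W}
    (he : (s((cc m a : VT W), cc m b)) ∈ (cutGraph G (ulayout σH) i).edgeSet) :
    ofs (Fintype.card W) m + 1 ≤ i ∧ i ≤ ofs (Fintype.card W) m + (Fintype.card W) - 1 := by
  rw [SimpleGraph.mem_edgeSet] at he
  obtain ⟨hadj, hcr⟩ := he
  have ha := (σH a).is_lt
  have hb := (σH b).is_lt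
  simp only [ulayout_apply, upos_cc] at hcr
  omega

theorem Framework.upper (F : Framework H G r PA PB s) (k : ℕ)
    (hroot : (σH r : ℕ) = 0) (hmw : mw H σH ≤ k) :
    ((ulayout σH) uu : ℕ) = 0 ∧ mw G (ulayout σH) ≤ k + 1 := by
  constructor
  · simp
  refine mw_le ?_
  intro i hi
  rw [Finset.mem_Ico, card_VT] at hi
  refine mim_le ?_
  intro M hM
  classical
  set P : Sym2 (VT W) → Prop := fun e => ∃ (m : Fin 3) (a b : W), e = s(cc m a, cc m b)
    with hP
  have hsplit := Finset.card_filter_add_card_filter_not (s := M) (p := P)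
  -- the rest part has at most one edge
  have hrest : (M.filter (fun e => ¬ P e)).card ≤ 1 := by
    rw [Finset.card_le_one]
    intro e he f hf
    by_contra hne
    rw [Finset.mem_filter] at he hf
    exact rest_pair F hroot hM he.1 hf.1 hne he.2 hf.2
  -- the copy part
  have hcopy : (M.filter P).card ≤ k := by
    have hMc : IsInducedMatching (cutGraph G (ulayout σH) i) (M.filter P) :=
      hM.subset (Finset.filter_subset _ _)
    by_cases hc0 : (2 ≤ i ∧ i ≤ Fintype.card W) ∨
        (Fintype.card W + 3 ≤ i ∧ i ≤ 2 * Fintype.card W + 1) ∨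
        (2 * Fintype.card W + 5 ≤ i ∧ i ≤ 3 * Fintype.card W + 3)
    · -- a copy is split; identify it
      obtain ⟨m, hm1, hm2⟩ : ∃ m : Fin 3, ofs (Fintype.card W) m + 1 ≤ i ∧
          i ≤ ofs (Fintype.card W) m + Fintype.card W - 1 := by
        rcases hc0 with h | h | h
        · exact ⟨0, by simp; omega, by simp; omega⟩
        · exact ⟨1, by simp; omega, by simp; omega⟩
        · exact ⟨2, by simp; omega, by simp; omega⟩
      -- all copy edges are in copy m
      have hrange : ∀ e ∈ M.filter P, ∀ x ∈ e, x ∈ Set.range (cc m : W → VT W) := by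
        intro e he x hx
        rw [Finset.mem_filter] at he
        obtain ⟨heM, m', a, b, rfl⟩ := he
        have hcc := copy_cut F (σH := σH) (hM.1 heM)
        have hmm : m' = m := by
          by_contra hne
          rcases fin3 m with rfl | rfl | rfl <;> rcases fin3 m' with rfl | rfl | rfl <;>
            simp at hcc hm1 hm2 hne <;> omega
        subst hmm
        rw [Sym2.mem_iff] at hx
        rcases hx with rfl | rfl
        · exact ⟨a, rfl⟩
        · exact ⟨b, rfl⟩
      -- transport down to a cut of H
      set dm : VT W → W := fun x => match x with
        | Sum.inr (_, Sum.inr a) => a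
        | _ => r with hdm
      have htr := transport_matching_down (H := H) (f := cc m) (σ := ulayout σH) (τ := σH)
        (i := i) (j := i - ofs (Fintype.card W) m)
        (cc_injective m) dm (fun a => rfl)
        (fun a b => by rw [F.adj_cc]; simp)
        (fun a => by
          simp only [ulayout_apply, upos_cc]
          omega)
        hMc hrange
      obtain ⟨M', hM'1, hM'2⟩ := htr
      have hj : i - ofs (Fintype.card W) m ∈ Finset.Ico 1 (Fintype.card W) := by
        rw [Finset.mem_Ico]
        omega
      calc (M.filter P).card = M'.card := hM'2.symm
        _ ≤ mim (cutGraph H σH (i - ofs (Fintype.card W) m)) := card_le_mim hM'1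
        _ ≤ mw H σH := mim_cut_le_mw H σH hj
        _ ≤ k := hmw
    · -- no copy is split: no copy edges at all
      have : M.filter P = ∅ := by
        rw [Finset.eq_empty_iff_forall_notMem]
        intro e he
        rw [Finset.mem_filter] at he
        obtain ⟨heM, m', a, b, rfl⟩ := he
        have hcc := copy_cut F (σH := σH) (hM.1 heM)
        rcases fin3 m' with rfl | rfl | rfl <;> simp at hcc <;>
          exact hc0 (by omega)
      rw [this]
      simp
  omega




variable {V : Type*} [Fintype V]

lemma singleton_matching {K : SimpleGraph V} {a b : V} (h : K.Adj a b) :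
    IsInducedMatching K {s(a, b)} := by
  constructor
  · intro e he
    simp only [Finset.coe_singleton, Set.mem_singleton_iff] at he
    subst he
    exact h
  · intro e he f hf hne
    simp only [Finset.mem_singleton] at he hf
    exact absurd (he.trans hf.symm) hne

lemma sort3 (p : Fin 3 → ℕ) :
    ∃ a b c : Fin 3, a ≠ b ∧ a ≠ c ∧ b ≠ c ∧ p a ≤ p b ∧ p b ≤ p c := by
  rcases le_total (p 0) (p 1) with h01 | h01 <;>
    rcases le_total (p 1) (p 2) with h12 | h12 <;>
    rcases le_total (p 0) (p 2) with h02 | h02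
  · exact ⟨0, 1, 2, by decide, by decide, by decide, h01, h12⟩
  · exact ⟨0, 1, 2, by decide, by decide, by decide, h01, h12⟩
  · exact ⟨0, 2, 1, by decide, by decide, by decide, h02, h12⟩
  · exact ⟨2, 0, 1, by decide, by decide, by decide, h02, h01⟩
  · exact ⟨1, 0, 2, by decide, by decide, by decide, h01, h02⟩
  · exact ⟨1, 2, 0, by decide, by decide, by decide, h12, h02⟩
  · exact ⟨2, 1, 0, by decide, by decide, by decide, h12, h01⟩
  · exact ⟨2, 1, 0, by decide, by decide, by decide, h12, h01⟩

/-- The subgraph of `G` induced by a set `S` (with edges only inside `S`). -/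
def safeG (G : SimpleGraph V) (S : Set V) : SimpleGraph V where
  Adj x y := G.Adj x y ∧ x ∈ S ∧ y ∈ S
  symm := ⟨fun _ _ h => ⟨h.1.symm, h.2.2, h.2.1⟩⟩
  loopless := ⟨fun _ h => G.irrefl h.1⟩

variable {W : Type*} [Fintype W]
variable {H : SimpleGraph W} {G : SimpleGraph (VT W)} {r : W} {PA PB : W → Prop} {s : Prop}

lemma Framework.ccHomAdj (F : Framework H G r PA PB s) (m : Fin 3) {a b : W}
    (h : H.Adj a b) : G.Adj (cc m a) (cc m b) := (F.adj_cc m m a b).2 ⟨rfl, h⟩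

lemma Framework.preconnected (F : Framework H G r PA PB s) (hH : H.Preconnected) :
    G.Preconnected := by
  have hru : ∀ x : VT W, G.Reachable uu x := by
    intro x
    rcases vt_cases x with rfl | ⟨m, rfl⟩ | ⟨m, a, rfl⟩
    · exact SimpleGraph.Reachable.refl _
    · exact (F.adj_uv m).reachable
    · refine ((F.adj_uv m).reachable.trans
        (((F.adj_vc m m r).2 ⟨rfl, F.hPBr⟩).reachable.trans ?_))
      exact (hH r a).map ⟨cc m, fun h => F.ccHomAdj m h⟩
  intro x y
  exact (hru x).symm.trans (hru y)

theorem Framework.lower (F : Framework H G r PA PB s) (hH : H.Preconnected) (k : ℕ)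
    (hk : ∀ τ : W ≃ Fin (Fintype.card W), k ≤ mw H τ) :
    ∀ σ : VT W ≃ Fin (Fintype.card (VT W)), k + 1 ≤ mw G σ := by
  intro σ
  have hcV : Fintype.card (VT W) = 3 * Fintype.card W + 4 := card_VT
  rcases Nat.eq_zero_or_pos k with rfl | hk1
  · -- k = 0 : just need a crossing edge at the cut i = 1
    have h1 : (1 : ℕ) ∈ Finset.Ico 1 (Fintype.card (VT W)) := by
      rw [Finset.mem_Ico]; omega
    set x0 : VT W := σ.symm ⟨0, by omega⟩ with hx0
    set y0 : VT W := σ.symm ⟨Fintype.card (VT W) - 1, by omega⟩ with hy0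
    obtain ⟨wk⟩ := F.preconnected hH x0 y0
    obtain ⟨a, b, hab, ha, hb, _, _⟩ := walk_crossing σ 1 wk
      (by rw [hx0]; simp) (by rw [hy0]; simp; omega)
    have hone : (1 : ℕ) ≤ mim (cutGraph G σ 1) := by
      have := card_le_mim (singleton_matching (K := cutGraph G σ 1)
        (a := a) (b := b) ⟨hab, Or.inl ⟨ha, hb⟩⟩)
      simpa using this
    exact le_trans hone (mim_cut_le_mw G σ h1)
  · -- k ≥ 1 : the three-copies argument
    -- for each copy, a cut of the restricted layout with an induced matching of size k
    have key : ∀ m : Fin 3, ∃ (j : ℕ) (M : Finset (Sym2 W)),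
        j ∈ Finset.Ico 1 (Fintype.card W) ∧
        IsInducedMatching (cutGraph H (restrictLayout σ (cc m) (cc_injective m)) j) M ∧
        M.card = k := by
      intro m
      obtain ⟨j, hj, hmim⟩ := exists_cut_of_le_mw hk1
        (hk (restrictLayout σ (cc m) (cc_injective m)))
      obtain ⟨M, hM, hc⟩ := exists_matching_of_le_mim hmim
      exact ⟨j, M, hj, hM, hc⟩
    choose jm Mm hjm hMm hMmcard using key
    have hcW : 1 ≤ Fintype.card W := Fintype.card_pos_iff.2 ⟨r⟩
    have hpex := fun m : Fin 3 =>
      restrict_cut_global σ (cc m) (cc_injective m) (hjm m)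
    choose pm hpm1 hpm2 corr using hpex
    -- order the three cut positions
    obtain ⟨ia, ib, ic, hab, hac, hbc, hpab, hpbc⟩ := sort3 pm
    set p := pm ib with hp
    -- transport the matching of copy ib
    have htr := transport_matching_up (G := G) (σ := σ) (i := p)
      (cc_injective ib) (fun a b => by rw [F.adj_cc]; simp) (corr ib) (hMm ib)
    obtain ⟨Mb', htrIIM, htrcard, hMbRange⟩ := htr
    -- a vertex of copy ia on the left of the cut p
    have hleft : ∃ aw : W, (σ (cc ia aw) : ℕ) < p := by
      have hne : (Mm ia).Nonempty := Finset.card_pos.1 (by rw [hMmcard ia]; omega)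
      obtain ⟨e, he⟩ := hne
      have hedge := (hMm ia).1 he
      induction e using Sym2.ind with
      | _ α β =>
        rw [SimpleGraph.mem_edgeSet] at hedge
        obtain ⟨_, hcr⟩ := hedge
        rcases hcr with ⟨h1, _⟩ | ⟨h1, _⟩
        · exact ⟨α, by have := (corr ia α).1 h1; omega⟩
        · exact ⟨β, by have := (corr ia β).1 h1; omega⟩
    -- a vertex of copy ic on the right of the cut p
    have hright : ∃ cw : W, p ≤ (σ (cc ic cw) : ℕ) := by
      have hne : (Mm ic).Nonempty := Finset.card_pos.1 (by rw [hMmcard ic]; omega)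
      obtain ⟨e, he⟩ := hne
      have hedge := (hMm ic).1 he
      induction e using Sym2.ind with
      | _ α β =>
        rw [SimpleGraph.mem_edgeSet] at hedge
        obtain ⟨_, hcr⟩ := hedge
        rcases hcr with ⟨_, h2⟩ | ⟨_, h2⟩
        · refine ⟨β, ?_⟩
          have h3 : ¬ (((restrictLayout σ (cc ic) (cc_injective ic)) β : ℕ) < jm ic) := by omega
          have := (corr ic β).not.1 h3
          omega
        · refine ⟨α, ?_⟩
          have h3 : ¬ (((restrictLayout σ (cc ic) (cc_injective ic)) α : ℕ) < jm ic) := by omega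
          have := (corr ic α).not.1 h3
          omega
    obtain ⟨aw, haw⟩ := hleft
    obtain ⟨cw, hcw⟩ := hright
    -- the safe set, disjoint from copy ib and non-adjacent to it
    set S : Set (VT W) := {x | (∃ w, x = cc ia w) ∨ (∃ w, x = cc ic w) ∨
      x = vv ia ∨ x = vv ic ∨ (x = uu ∧ ∀ z, ¬ PA z)} with hS
    have fact1 : ∀ z ∈ S, ∀ w : W, z ≠ cc ib w ∧ ¬ G.Adj z (cc ib w) := by
      intro z hz w
      rw [hS] at hz
      rcases hz with ⟨w', rfl⟩ | ⟨w', rfl⟩ | rfl | rfl | ⟨rfl, hA⟩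
      · exact ⟨by simp [hab], F.adj_cc_ne hab⟩
      · exact ⟨by simp [Ne.symm hbc], F.adj_cc_ne (Ne.symm hbc)⟩
      · exact ⟨by simp, F.adj_vc_ne hab⟩
      · exact ⟨by simp, F.adj_vc_ne (Ne.symm hbc)⟩
      · exact ⟨by simp, fun h => hA w ((F.adj_uc ib w).1 h)⟩
    -- a walk in the safe subgraph from copy ia to copy ic
    have hreach : (safeG G S).Reachable (cc ia aw) (cc ic cw) := by
      have r1 : (safeG G S).Reachable (cc ia aw) (cc ia r) :=
        (hH aw r).map (⟨cc ia, fun h =>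
          ⟨F.ccHomAdj ia h, Or.inl ⟨_, rfl⟩, Or.inl ⟨_, rfl⟩⟩⟩ : H →g (safeG G S))
      have r2 : (safeG G S).Adj (cc ia r) (vv ia) := by
        refine ⟨((F.adj_vc ia ia r).2 ⟨rfl, F.hPBr⟩).symm, Or.inl ⟨r, rfl⟩, ?_⟩
        rw [hS]; simp
      have r4 : (safeG G S).Adj (vv ic) (cc ic r) := by
        refine ⟨(F.adj_vc ic ic r).2 ⟨rfl, F.hPBr⟩, ?_, Or.inr (Or.inl ⟨r, rfl⟩)⟩
        rw [hS]; simp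
      have r5 : (safeG G S).Reachable (cc ic r) (cc ic cw) :=
        (hH r cw).map (⟨cc ic, fun h =>
          ⟨F.ccHomAdj ic h, Or.inr (Or.inl ⟨_, rfl⟩), Or.inr (Or.inl ⟨_, rfl⟩)⟩⟩ :
            H →g (safeG G S))
      have r3 : (safeG G S).Reachable (vv ia) (vv ic) := by
        rcases F.hcase with hA | hs'
        · have e1 : (safeG G S).Adj (vv ia) uu := by
            refine ⟨(F.adj_uv ia).symm, ?_, ?_⟩
            · rw [hS]; simp
            · rw [hS]; simp [hA]
          have e2 : (safeG G S).Adj uu (vv ic) := by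
            refine ⟨F.adj_uv ic, ?_, ?_⟩
            · rw [hS]; simp [hA]
            · rw [hS]; simp
          exact e1.reachable.trans e2.reachable
        · refine SimpleGraph.Adj.reachable ?_
          refine ⟨(F.adj_vv ia ic).2 ⟨hs', hac⟩, ?_, ?_⟩ <;> rw [hS] <;> simp
      exact r1.trans (r2.reachable.trans (r3.trans (r4.reachable.trans r5)))
    obtain ⟨wk⟩ := hreach
    obtain ⟨x, y, hxy, hx, hy, _, _⟩ := walk_crossing σ p wk haw hcw
    obtain ⟨hxyG, hxS, hyS⟩ := hxy
    -- the extra edge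
    set ee := s(x, y) with hee
    have heeM : ee ∉ Mb' := by
      intro hmem
      obtain ⟨w, hw⟩ := hMbRange ee hmem x (by rw [hee]; simp)
      exact (fact1 x hxS w).1 hw
    set M' := insert ee Mb' with hM'
    have hM'card : M'.card = k + 1 := by
      rw [hM', Finset.card_insert_of_notMem heeM, htrcard, hMmcard ib]
    have hM'IIM : IsInducedMatching (cutGraph G σ p) M' := by
      constructor
      · intro e he
        rw [hM'] at he
        simp only [Finset.coe_insert, Set.mem_insert_iff] at he
        rcases he with rfl | he
        · rw [SimpleGraph.mem_edgeSet]
          exact ⟨hxyG, Or.inl ⟨hx, hy⟩⟩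
        · exact htrIIM.1 he
      · intro e he f hf hne q1 hq1 q2 hq2
        rw [hM', Finset.mem_insert] at he hf
        rcases he with rfl | he <;> rcases hf with rfl | hf
        · exact absurd rfl hne
        · -- e = ee, f ∈ Mb'
          obtain ⟨w, rfl⟩ := hMbRange f hf q2 hq2
          have hq1S : q1 ∈ S := by
            rw [hee, Sym2.mem_iff] at hq1
            rcases hq1 with rfl | rfl
            · exact hxS
            · exact hyS
          refine ⟨(fact1 q1 hq1S w).1, fun hadj => (fact1 q1 hq1S w).2 hadj.1⟩
        · -- e ∈ Mb', f = ee
          obtain ⟨w, rfl⟩ := hMbRange e he q1 hq1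
          have hq2S : q2 ∈ S := by
            rw [hee, Sym2.mem_iff] at hq2
            rcases hq2 with rfl | rfl
            · exact hxS
            · exact hyS
          refine ⟨fun h => (fact1 q2 hq2S w).1 h.symm,
            fun hadj => (fact1 q2 hq2S w).2 hadj.symm.1⟩
        · exact htrIIM.2 e he f hf hne q1 hq1 q2 hq2
    -- conclude
    have hpmem : p ∈ Finset.Ico 1 (Fintype.card (VT W)) := by
      rw [Finset.mem_Ico]
      exact ⟨hpm1 ib, hpm2 ib⟩
    calc k + 1 = M'.card := hM'card.symm
      _ ≤ mim (cutGraph G σ p) := card_le_mim hM'IIM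
      _ ≤ mw G σ := mim_cut_le_mw G σ hpmem




section PowAdj

variable {V : Type*} [Fintype V]

lemma edist_le_two_iff (G : SimpleGraph V) (x y : V) :
    G.edist x y ≤ ((2 : ℕ) : ℕ∞) ↔ x = y ∨ G.Adj x y ∨ ∃ z, G.Adj x z ∧ G.Adj z y := by
  constructor
  · intro h
    have hne : G.edist x y ≠ ⊤ := by
      intro hh
      rw [hh] at h
      exact absurd h (by simp)
    obtain ⟨p, hp⟩ := SimpleGraph.exists_walk_of_edist_ne_top hne
    have hlen : p.length ≤ 2 := by
      have h2 : (p.length : ℕ∞) ≤ ((2 : ℕ) : ℕ∞) := by rw [hp]; exact h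
      exact_mod_cast h2
    cases p with
    | nil => exact Or.inl rfl
    | cons hadj q =>
      cases q with
      | nil => exact Or.inr (Or.inl hadj)
      | cons hadj2 q2 =>
        have h0 : q2.length = 0 := by
          simp only [SimpleGraph.Walk.length_cons] at hlen
          omega
        have heq := SimpleGraph.Walk.eq_of_length_eq_zero h0
        subst heq
        exact Or.inr (Or.inr ⟨_, hadj, hadj2⟩)
  · intro h
    rcases h with rfl | h | ⟨z, h1, h2⟩
    · simp [SimpleGraph.edist_self]
    · refine le_trans (SimpleGraph.edist_le (SimpleGraph.Walk.cons h SimpleGraph.Walk.nil)) ?_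
      simp
    · refine le_trans (SimpleGraph.edist_le
        (SimpleGraph.Walk.cons h1 (SimpleGraph.Walk.cons h2 SimpleGraph.Walk.nil))) ?_
      simp

lemma graphPow_two_adj (G : SimpleGraph V) (x y : V) :
    (graphPow G 2).Adj x y ↔ x ≠ y ∧ (G.Adj x y ∨ ∃ z, G.Adj x z ∧ G.Adj z y) := by
  have h0 : (graphPow G 2).Adj x y ↔ x ≠ y ∧ G.edist x y ≤ ((2 : ℕ) : ℕ∞) := by
    exact Iff.rfl
  rw [h0, edist_le_two_iff]
  constructor
  · rintro ⟨hne, rfl | h⟩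
    · exact absurd rfl hne
    · exact ⟨hne, h⟩
  · rintro ⟨hne, h⟩
    exact ⟨hne, Or.inr h⟩

end PowAdj

/-! ### Structure of `Lgraph (k+1)` -/

/-- The defining relation of `Lgraph (k+1)`, in terms of `uu`, `vv`, `cc`. -/
def Lrel (k : ℕ) (x y : LV (k + 1)) : Prop :=
  (∃ i : Fin 3, x = (uu : VT (LV k)) ∧ y = vv i) ∨
  (∃ i : Fin 3, x = (vv i : VT (LV k)) ∧ y = cc i (Lroot k)) ∨
  (∃ (i : Fin 3) (a b : LV k), x = (cc i a : VT (LV k)) ∧ y = cc i b ∧ (Lgraph k).Adj a b)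

lemma Lrel_uv (k : ℕ) (i : Fin 3) : Lrel k (uu : VT (LV k)) (vv i) :=
  Or.inl ⟨i, rfl, rfl⟩

lemma Lrel_vc (k : ℕ) (i : Fin 3) : Lrel k (vv i : VT (LV k)) (cc i (Lroot k)) :=
  Or.inr (Or.inl ⟨i, rfl, rfl⟩)

lemma Lrel_ccc (k : ℕ) (i : Fin 3) {a b : LV k} (h : (Lgraph k).Adj a b) :
    Lrel k (cc i a : VT (LV k)) (cc i b) :=
  Or.inr (Or.inr ⟨i, a, b, rfl, rfl, h⟩)

lemma Lrel_ne (k : ℕ) {x y : LV (k + 1)} (h : Lrel k x y) : x ≠ y := by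
  rcases h with ⟨i, rfl, rfl⟩ | ⟨i, rfl, rfl⟩ | ⟨i, a, b, rfl, rfl, hab⟩
  · exact uu_ne_vv i
  · exact vv_ne_cc i i (Lroot k)
  · intro h
    exact hab.ne ((cc_inj_iff i i a b).1 h).2

lemma Ladj (k : ℕ) (x y : LV (k + 1)) :
    (Lgraph (k + 1)).Adj x y ↔ Lrel k x y ∨ Lrel k y x := by
  have h0 : (Lgraph (k + 1)).Adj x y ↔ x ≠ y ∧ (Lrel k x y ∨ Lrel k y x) := by
    rw [Lgraph]
    exact SimpleGraph.fromRel_adj _ x y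
  rw [h0]
  constructor
  · exact And.right
  · intro h
    refine ⟨?_, h⟩
    rcases h with h | h
    · exact Lrel_ne k h
    · exact (Lrel_ne k h).symm

lemma Ladj_uu (k : ℕ) (z : LV (k + 1)) :
    (Lgraph (k + 1)).Adj (uu : VT (LV k)) z ↔ ∃ i, z = (vv i : VT (LV k)) := by
  refine (Ladj k _ _).trans ?_
  constructor
  · rintro ((⟨i, _, rfl⟩ | ⟨i, h, _⟩ | ⟨i, a, b, h, _, _⟩) |
      (⟨i, _, h⟩ | ⟨i, _, h⟩ | ⟨i, a, b, _, h, _⟩))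
    · exact ⟨i, rfl⟩
    · exact absurd h (uu_ne_vv i)
    · exact absurd h (uu_ne_cc i a)
    · exact absurd h (uu_ne_vv i)
    · exact absurd h (uu_ne_cc i (Lroot k))
    · exact absurd h (uu_ne_cc i b)
  · rintro ⟨i, rfl⟩
    exact Or.inl (Lrel_uv k i)

lemma Ladj_vv (k : ℕ) (i : Fin 3) (z : LV (k + 1)) :
    (Lgraph (k + 1)).Adj (vv i : VT (LV k)) z ↔
      z = (uu : VT (LV k)) ∨ z = (cc i (Lroot k) : VT (LV k)) := by
  refine (Ladj k _ _).trans ?_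
  constructor
  · rintro ((⟨j, h, _⟩ | ⟨j, h, rfl⟩ | ⟨j, a, b, h, _, _⟩) |
      (⟨j, rfl, h⟩ | ⟨j, h, h'⟩ | ⟨j, a, b, h, h', _⟩))
    · exact absurd h (vv_ne_uu i)
    · obtain rfl : i = j := (vv_inj_iff i j).1 h
      exact Or.inr rfl
    · exact absurd h (vv_ne_cc i j a)
    · exact Or.inl rfl
    · exact absurd h' (vv_ne_cc i j (Lroot k))
    · exact absurd h' (vv_ne_cc i j b)
  · rintro (rfl | rfl)
    · exact Or.inr (Lrel_uv k i)
    · exact Or.inl (Lrel_vc k i)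

lemma Ladj_cc (k : ℕ) (i : Fin 3) (a : LV k) (z : LV (k + 1)) :
    (Lgraph (k + 1)).Adj (cc i a : VT (LV k)) z ↔
      (a = Lroot k ∧ z = (vv i : VT (LV k))) ∨
      ∃ b, z = (cc i b : VT (LV k)) ∧ (Lgraph k).Adj a b := by
  refine (Ladj k _ _).trans ?_
  constructor
  · rintro ((⟨j, h, _⟩ | ⟨j, h, _⟩ | ⟨j, a', b, h, rfl, hab⟩) |
      (⟨j, _, h⟩ | ⟨j, rfl, h⟩ | ⟨j, a', b, h, h', hab⟩))
    · exact absurd h (cc_ne_uu i a)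
    · exact absurd h (cc_ne_vv i j a)
    · obtain ⟨h1, h2⟩ := (cc_inj_iff i j a a').1 h
      subst h1
      subst h2
      exact Or.inr ⟨b, rfl, hab⟩
    · exact absurd h (cc_ne_vv i j a)
    · obtain ⟨h1, h2⟩ := (cc_inj_iff i j a (Lroot k)).1 h
      subst h1
      exact Or.inl ⟨h2, rfl⟩
    · obtain ⟨h1, h2⟩ := (cc_inj_iff i j a b).1 h'
      subst h1
      subst h2
      exact Or.inr ⟨a', h, hab.symm⟩
  · rintro (⟨rfl, rfl⟩ | ⟨b, rfl, hab⟩)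
    · exact Or.inr (Lrel_vc k i)
    · exact Or.inl (Lrel_ccc k i hab)

/-! ### The two framework instances -/

lemma tree_framework (k : ℕ) :
    Framework (Lgraph k) (Lgraph (k + 1)) (Lroot k)
      (fun _ => False) (fun a => a = Lroot k) False := by
  constructor
  · intro i
    exact (Ladj_uu k (vv i)).2 ⟨i, rfl⟩
  · intro i j
    refine (Ladj_vv k _ _).trans ?_
    constructor
    · rintro (h | h)
      · exact absurd h (vv_ne_uu j)
      · exact absurd h (vv_ne_cc j i (Lroot k))
    · rintro ⟨h, _⟩
      exact h.elim
  · intro i a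
    refine (Ladj_uu k _).trans ?_
    constructor
    · rintro ⟨t, ht⟩
      exact absurd ht (cc_ne_vv i t a)
    · intro h
      exact h.elim
  · intro i j a
    refine (Ladj_vv k _ _).trans ?_
    constructor
    · rintro (h | h)
      · exact absurd h (cc_ne_uu j a)
      · obtain ⟨h1, h2⟩ := (cc_inj_iff j i a (Lroot k)).1 h
        exact ⟨h1.symm, h2⟩
    · rintro ⟨rfl, rfl⟩
      exact Or.inr rfl
  · intro i j a b
    refine (Ladj_cc k _ _ _).trans ?_
    constructor
    · rintro (⟨_, h⟩ | ⟨c, h, hab⟩)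
      · exact absurd h (cc_ne_vv j i b)
      · obtain ⟨h1, h2⟩ := (cc_inj_iff j i b c).1 h
        rw [← h2] at hab
        exact ⟨h1.symm, hab⟩
    · rintro ⟨rfl, hab⟩
      exact Or.inr ⟨b, rfl, hab⟩
  · intro a h
    exact h.elim
  · rfl
  · exact Or.inl fun a h => h

lemma sq_framework (k : ℕ) :
    Framework (graphPow (Lgraph k) 2) (graphPow (Lgraph (k + 1)) 2) (Lroot k)
      (fun a => a = Lroot k)
      (fun a => a = Lroot k ∨ (Lgraph k).Adj (Lroot k) a) True := by
  constructor
  · intro i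
    refine (graphPow_two_adj _ _ _).mpr ?_
    exact ⟨uu_ne_vv i, Or.inl ((Ladj_uu k (vv i)).2 ⟨i, rfl⟩)⟩
  · intro i j
    refine (graphPow_two_adj _ _ _).trans ?_
    constructor
    · rintro ⟨hne, _⟩
      exact ⟨trivial, fun h => hne (by rw [h])⟩
    · rintro ⟨_, hne⟩
      refine ⟨fun h => hne ((vv_inj_iff i j).1 h), Or.inr ⟨uu, ?_, ?_⟩⟩
      · exact ((Lgraph (k + 1)).adj_symm ((Ladj_uu k (vv i)).2 ⟨i, rfl⟩))
      · exact (Ladj_uu k (vv j)).2 ⟨j, rfl⟩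
  · intro i a
    refine (graphPow_two_adj _ _ _).trans ?_
    constructor
    · rintro ⟨hne, h | ⟨z, h1, h2⟩⟩
      · obtain ⟨j, hj⟩ := (Ladj_uu k _).1 h
        exact absurd hj (cc_ne_vv i j a)
      · obtain ⟨j, rfl⟩ := (Ladj_uu k _).1 h1
        rcases (Ladj_vv k j _).1 h2 with h | h
        · exact absurd h (cc_ne_uu i a)
        · exact ((cc_inj_iff i j a (Lroot k)).1 h).2
    · rintro rfl
      refine ⟨uu_ne_cc i (Lroot k), Or.inr ⟨vv i, (Ladj_uu k (vv i)).2 ⟨i, rfl⟩, ?_⟩⟩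
      exact ((Lgraph (k + 1)).adj_symm
        ((Ladj_cc k i (Lroot k) (vv i)).2 (Or.inl ⟨rfl, rfl⟩)))
  · intro i j a
    refine (graphPow_two_adj _ _ _).trans ?_
    constructor
    · rintro ⟨hne, h | ⟨z, h1, h2⟩⟩
      · rcases (Ladj_vv k i _).1 h with h' | h'
        · exact absurd h' (cc_ne_uu j a)
        · obtain ⟨h1', h2'⟩ := (cc_inj_iff j i a (Lroot k)).1 h'
          exact ⟨h1'.symm, Or.inl h2'⟩
      · rcases (Ladj_vv k i z).1 h1 with rfl | rfl
        · obtain ⟨t, ht⟩ := (Ladj_uu k _).1 h2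
          exact absurd ht (cc_ne_vv j t a)
        · rcases (Ladj_cc k i (Lroot k) _).1 h2 with ⟨_, ht⟩ | ⟨b, ht, hadj⟩
          · exact absurd ht (cc_ne_vv j i a)
          · obtain ⟨h1', h2'⟩ := (cc_inj_iff j i a b).1 ht
            refine ⟨h1'.symm, Or.inr ?_⟩
            rw [← h2'] at hadj
            exact hadj
    · rintro ⟨rfl, h | h⟩
      · subst h
        exact ⟨vv_ne_cc i i (Lroot k), Or.inl ((Ladj_vv k i _).2 (Or.inr rfl))⟩
      · refine ⟨vv_ne_cc i i a, Or.inr ⟨cc i (Lroot k), (Ladj_vv k i _).2 (Or.inr rfl), ?_⟩⟩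
        exact (Ladj_cc k i (Lroot k) _).2 (Or.inr ⟨a, rfl, h⟩)
  · intro i j a b
    refine (graphPow_two_adj _ _ _).trans (Iff.trans ?_ (and_congr Iff.rfl (graphPow_two_adj _ _ _)).symm)
    constructor
    · rintro ⟨hne, h | ⟨z, h1, h2⟩⟩
      · rcases (Ladj_cc k i a _).1 h with ⟨_, ht⟩ | ⟨c, ht, hadj⟩
        · exact absurd ht (cc_ne_vv j i b)
        · obtain ⟨h1', h2'⟩ := (cc_inj_iff j i b c).1 ht
          subst h1'
          subst h2'
          exact ⟨rfl, fun hab => hne (congrArg _ hab), Or.inl hadj⟩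
      · rcases (Ladj_cc k i a z).1 h1 with ⟨rfl, rfl⟩ | ⟨c, rfl, hadj⟩
        · rcases (Ladj_vv k i _).1 h2 with ht | ht
          · exact absurd ht (cc_ne_uu j b)
          · obtain ⟨h1', h2'⟩ := (cc_inj_iff j i b (Lroot k)).1 ht
            subst h1'
            subst h2'
            exact absurd rfl hne
        · rcases (Ladj_cc k i c _).1 h2 with ⟨rfl, ht⟩ | ⟨d, ht, hadj2⟩
          · exact absurd ht (cc_ne_vv j i b)
          · obtain ⟨h1', h2'⟩ := (cc_inj_iff j i b d).1 ht
            subst h1'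
            subst h2'
            exact ⟨rfl, fun hab => hne (congrArg _ hab), Or.inr ⟨c, hadj, hadj2⟩⟩
    · rintro ⟨rfl, hab, h | ⟨c, h1, h2⟩⟩
      · exact ⟨fun hcc => hab ((cc_inj_iff i i a b).1 hcc).2,
          Or.inl ((Ladj_cc k i a _).2 (Or.inr ⟨b, rfl, h⟩))⟩
      · refine ⟨fun hcc => hab ((cc_inj_iff i i a b).1 hcc).2, Or.inr ⟨cc i c, ?_, ?_⟩⟩
        · exact (Ladj_cc k i a _).2 (Or.inr ⟨c, rfl, h1⟩)
        · exact (Ladj_cc k i c _).2 (Or.inr ⟨b, rfl, h2⟩)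
  · exact fun a h => h
  · exact Or.inl rfl
  · exact Or.inr trivial




/-- The inductive invariant: optimal root-first layouts and matching lower bounds
for `L k` and its square, together with connectivity. -/
def Good (k : ℕ) : Prop :=
  ((∃ σ : LV k ≃ Fin (Fintype.card (LV k)), (σ (Lroot k) : ℕ) = 0 ∧ mw (Lgraph k) σ ≤ k) ∧
    ∀ σ : LV k ≃ Fin (Fintype.card (LV k)), k ≤ mw (Lgraph k) σ) ∧
  ((∃ σ : LV k ≃ Fin (Fintype.card (LV k)), (σ (Lroot k) : ℕ) = 0 ∧
      mw (graphPow (Lgraph k) 2) σ ≤ k) ∧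
    ∀ σ : LV k ≃ Fin (Fintype.card (LV k)), k ≤ mw (graphPow (Lgraph k) 2) σ) ∧
  (Lgraph k).Preconnected

lemma card_LV0 : Fintype.card (LV 0) = 1 := by
  haveI : Unique (LV 0) := inferInstanceAs (Unique Unit)
  exact Fintype.card_unique

lemma mw_LV0 (G : SimpleGraph (LV 0)) (σ : LV 0 ≃ Fin (Fintype.card (LV 0))) :
    mw G σ = 0 := by
  rw [mw, card_LV0]
  simp

lemma good_zero : Good 0 := by
  haveI : Subsingleton (LV 0) := inferInstanceAs (Subsingleton Unit)
  refine ⟨⟨⟨Fintype.equivFin _, ?_, ?_⟩, fun σ => Nat.zero_le _⟩,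
    ⟨⟨Fintype.equivFin _, ?_, ?_⟩, fun σ => Nat.zero_le _⟩, ?_⟩
  · have h1 := ((Fintype.equivFin (LV 0)) (Lroot 0)).is_lt
    have h2 := card_LV0
    omega
  · rw [mw_LV0]
  · have h1 := ((Fintype.equivFin (LV 0)) (Lroot 0)).is_lt
    have h2 := card_LV0
    omega
  · rw [mw_LV0]
  · intro x y
    rw [Subsingleton.elim x y]

lemma good_succ (k : ℕ) (h : Good k) : Good (k + 1) := by
  obtain ⟨⟨⟨σT, hσT1, hσT2⟩, hTlow⟩, ⟨⟨σS, hσS1, hσS2⟩, hSlow⟩, hconn⟩ := h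
  have F := tree_framework k
  have Fsq := sq_framework k
  have hsqconn : (graphPow (Lgraph k) 2).Preconnected := by
    intro x y
    refine (hconn x y).mono ?_
    intro a b hab
    exact ⟨hab.ne, (edist_le_two_iff (Lgraph k) a b).2 (Or.inr (Or.inl hab))⟩
  have hTup := F.upper k hσT1 hσT2
  have hSup := Fsq.upper k hσS1 hσS2
  have hTlo := F.lower hconn k hTlow
  have hSlo := Fsq.lower hsqconn k hSlow
  refine ⟨⟨⟨ulayout σT, hTup.1, hTup.2⟩, fun σ => hTlo σ⟩,
    ⟨⟨ulayout σS, hSup.1, hSup.2⟩, fun σ => hSlo σ⟩, F.preconnected hconn⟩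

lemma good_all (k : ℕ) : Good k := by
  induction k with
  | zero => exact good_zero
  | succ n ih => exact good_succ n ih

theorem lmw_Lgraph_square' (k : ℕ) :
    lmw (graphPow (Lgraph k) 2) = k ∧ lmw (Lgraph k) = k := by
  obtain ⟨⟨⟨σT, _, hσT2⟩, hTlow⟩, ⟨⟨σS, _, hσS2⟩, hSlow⟩, _⟩ := good_all k
  constructor
  · exact le_antisymm (le_trans (lmw_le _ σS) hσS2) (le_lmw _ hSlow)
  · exact le_antisymm (le_trans (lmw_le _ σT) hσT2) (le_lmw _ hTlow)


/-- For every `k ≥ 0`, the square of the tree `L k` satisfies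
`lmw ((L k)²) = k = lmw (L k)`. -/
theorem lmw_Lgraph_square (k : ℕ) :
    lmw (graphPow (Lgraph k) 2) = k ∧ lmw (Lgraph k) = k := by
  exact lmw_Lgraph_square' k

end LMW
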